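/- arXiv:2502.16637 — 2 statements merged into one kernel-verified Lean document; each statement's English description precedes it below -/
import Mathlib

section
/- Let n ≥ 1. For k = 1,…,n let p_k : ℝ × ℝⁿ → (0,∞) be three-times continuously differentiable functions (the true conditional marginal densities p_k(y_k | x)), and for i = 1,…,n let p̂_i : ℝ × ℝⁿ → (0,∞) be functions (the estimated conditional marginal densities). Let h : ℝⁿ → ℝⁿ be a twice continuously differentiable bijection with twice continuously differentiable inverse, and write H(ŷ) for the Jacobian matrix of h at ŷ, assumed invertible at every ŷ. Suppose that for all ŷ ∈ ℝⁿ and x ∈ ℝⁿ: ∏_{i=1}^n p̂_i(ŷ_i, x) = (∏_{k=1}^n p_k(h(ŷ)_k, x)) · |det H(ŷ)|. For each k and each (y, x) define the vectors v_k(y,x) ∈ ℝⁿ with l-th entry ∂² log p_k(y_k, x) / ∂y_k ∂x_l, and v̊_k(y,x) ∈ ℝⁿ with l-th entry ∂³ log p_k(y_k, x) / ∂y_k² ∂x_l. If for every fixed y ∈ ℝⁿ the 2n vector-valued functions x ↦ v_1(y,x), x ↦ v̊_1(y,x), …, x ↦ v_n(y,x), x ↦ v̊_n(y,x) are linearly independent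 in the real vector space of functions from ℝⁿ to ℝⁿ, then there exist a permutation σ of {1,…,n} and functions h_1, …, h_n : ℝ → ℝ such that h(ŷ)_k = h_k(ŷ_{σ(k)}) for all ŷ ∈ ℝⁿ and all k; that is, h is an invertible component-wise transformation of a permuted version of the coordinates. -/
/-- Partial derivative of `f : ℝⁿ → ℝ` with respect to the `i`-th coordinate at `x`. -/
noncomputable def pd {k : ℕ} (i : Fin k) (f : (Fin k → ℝ) → ℝ) (x : Fin k → ℝ) : ℝ :=
  deriv (fun t => f (Function.update x i t)) (x i)

/-- Jacobian matrix of `h : ℝⁿ → ℝⁿ` at `yh`, with `(k, i)` entry `∂ h_k / ∂ y_i`. -/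
noncomputable def jac {n : ℕ} (h : (Fin n → ℝ) → (Fin n → ℝ)) (yh : Fin n → ℝ) :
    Matrix (Fin n) (Fin n) ℝ :=
  Matrix.of fun k i => pd i (fun z => h z k) yh

/-- `vvec p k y x` has `l`-th entry `∂² log p_k(y_k, x) / ∂y_k ∂x_l`. -/
noncomputable def vvec {n : ℕ} (p : Fin n → ℝ × (Fin n → ℝ) → ℝ) (k : Fin n)
    (y x : Fin n → ℝ) : Fin n → ℝ := fun l =>
  deriv (fun s => deriv (fun t => Real.log (p k (s, Function.update x l t))) (x l)) (y k)

/-- `vrvec p k y x` has `l`-th entry `∂³ log p_k(y_k, x) / ∂y_k² ∂x_l`. -/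
noncomputable def vrvec {n : ℕ} (p : Fin n → ℝ × (Fin n → ℝ) → ℝ) (k : Fin n)
    (y x : Fin n → ℝ) : Fin n → ℝ := fun l =>
  deriv (deriv (fun s => deriv (fun t => Real.log (p k (s, Function.update x l t))) (x l))) (y k)


section Stmt0Aux
open Function Real

lemma update_hasDerivAt {n : ℕ} (x : Fin n → ℝ) (l : Fin n) (t₀ : ℝ) :
    HasDerivAt (fun t : ℝ => Function.update x l t) (Pi.single l 1) t₀ := by
  have hrw : (fun t : ℝ => Function.update x l t)
      = fun t : ℝ => t • (Pi.single l 1 : Fin n → ℝ) + Function.update x l 0 := by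
    funext t; ext i
    by_cases hi : i = l
    · subst hi; simp
    · simp [Function.update_of_ne hi, Pi.single_eq_of_ne hi]
  rw [hrw]
  simpa using ((hasDerivAt_id t₀).smul_const (Pi.single l (1:ℝ))).add_const
    (Function.update x l 0)

lemma hasDerivAt_comp_update_snd {n : ℕ} {f : ℝ × (Fin n → ℝ) → ℝ} {s : ℝ} {x : Fin n → ℝ}
    {l : Fin n} {t₀ : ℝ} (hf : DifferentiableAt ℝ f (s, Function.update x l t₀)) :
    HasDerivAt (fun t => f (s, Function.update x l t))
      (fderiv ℝ f (s, Function.update x l t₀) (0, Pi.single l 1)) t₀ :=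
  hf.hasFDerivAt.comp_hasDerivAt t₀ ((hasDerivAt_const t₀ s).prodMk (update_hasDerivAt x l t₀))

lemma hasDerivAt_comp_update {n : ℕ} {g : (Fin n → ℝ) → ℝ} {z : Fin n → ℝ} {i : Fin n} {a₀ : ℝ}
    (hg : DifferentiableAt ℝ g (Function.update z i a₀)) :
    HasDerivAt (fun a => g (Function.update z i a))
      (fderiv ℝ g (Function.update z i a₀) (Pi.single i 1)) a₀ :=
  hg.hasFDerivAt.comp_hasDerivAt a₀ (update_hasDerivAt z i a₀)

example : (2 : WithTop ℕ∞) = 1 + 1 := by norm_num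
example : (1 : WithTop ℕ∞) ≤ 2 := by norm_num
example : (2 : WithTop ℕ∞) + 1 ≤ 3 := by norm_num
example : (1 : WithTop ℕ∞) + 1 ≤ 2 := by norm_num



lemma fderiv_coord {n : ℕ} {h : (Fin n → ℝ) → (Fin n → ℝ)} (hd : Differentiable ℝ h)
    (z v : Fin n → ℝ) (k : Fin n) :
    fderiv ℝ (fun z => h z k) z v = fderiv ℝ h z v k := by
  have h1 : HasFDerivAt (fun z => h z k)
      ((ContinuousLinearMap.proj k).comp (fderiv ℝ h z)) z :=
    ((ContinuousLinearMap.proj k : (Fin n → ℝ) →L[ℝ] ℝ).hasFDerivAt).comp z (hd z).hasFDerivAt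
  rw [h1.fderiv]; rfl

lemma jac_eq {n : ℕ} {h : (Fin n → ℝ) → (Fin n → ℝ)} (hd : Differentiable ℝ h)
    (z : Fin n → ℝ) (k i : Fin n) :
    jac h z k i = fderiv ℝ h z (Pi.single i 1) k := by
  have hg : DifferentiableAt ℝ (fun z => h z k) (Function.update z i (z i)) := by
    rw [Function.update_eq_self]
    exact (differentiableAt_pi.mp (hd z)) k
  have := (hasDerivAt_comp_update hg).deriv
  rw [Function.update_eq_self] at this
  rw [show jac h z k i = deriv (fun a => h (Function.update z i a) k) (z i) from rfl, this,
    fderiv_coord hd]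

lemma hasDerivAt_h_coord {n : ℕ} {h : (Fin n → ℝ) → (Fin n → ℝ)} (hd : Differentiable ℝ h)
    (w : Fin n → ℝ) (i : Fin n) (a₀ : ℝ) (k : Fin n) :
    HasDerivAt (fun a => h (Function.update w i a) k)
      (jac h (Function.update w i a₀) k i) a₀ := by
  have hg : DifferentiableAt ℝ (fun z => h z k) (Function.update w i a₀) :=
    (differentiableAt_pi.mp (hd _)) k
  have := hasDerivAt_comp_update hg
  rwa [fderiv_coord hd, ← jac_eq hd] at this



-- `Ufun q l x s = ∂ q(s, x) / ∂ x_l`.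
noncomputable def Ufun {n : ℕ} (q : ℝ × (Fin n → ℝ) → ℝ) (l : Fin n) (x : Fin n → ℝ)
    (s : ℝ) : ℝ :=
  fderiv ℝ q (s, x) (0, Pi.single l 1)

lemma Ufun_contDiff {n : ℕ} {q : ℝ × (Fin n → ℝ) → ℝ} (hq : ContDiff ℝ 3 q)
    (l : Fin n) (x : Fin n → ℝ) : ContDiff ℝ 2 (Ufun q l x) := by
  have h2 : ContDiff ℝ 2 (fderiv ℝ q) := hq.fderiv_right (by norm_num)
  have h3 : ContDiff ℝ 2 (fun s : ℝ => (s, x)) := contDiff_id.prodMk contDiff_const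
  exact (h2.comp h3).clm_apply contDiff_const

lemma Ufun_spec {n : ℕ} {q : ℝ × (Fin n → ℝ) → ℝ} (hq : Differentiable ℝ q)
    (l : Fin n) (x : Fin n → ℝ) (s : ℝ) :
    deriv (fun t => q (s, Function.update x l t)) (x l) = Ufun q l x s := by
  have hf : DifferentiableAt ℝ q (s, Function.update x l (x l)) := by
    rw [Function.update_eq_self]; exact hq _
  have := (hasDerivAt_comp_update_snd hf).deriv
  rwa [Function.update_eq_self] at this

lemma vvec_eq {n : ℕ} (p : Fin n → ℝ × (Fin n → ℝ) → ℝ)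
    (hppos : ∀ (k : Fin n) (s : ℝ) (x : Fin n → ℝ), 0 < p k (s, x))
    (hpsmooth : ∀ k, ContDiff ℝ 3 (p k)) (k : Fin n) (y x : Fin n → ℝ) (l : Fin n) :
    vvec p k y x l = deriv (Ufun (fun pr => Real.log (p k pr)) l x) (y k) ∧
    vrvec p k y x l = deriv (deriv (Ufun (fun pr => Real.log (p k pr)) l x)) (y k) := by
  have hq : ContDiff ℝ 3 (fun pr => Real.log (p k pr)) :=
    (hpsmooth k).log (fun pr => (hppos k pr.1 pr.2).ne')
  have hinner : (fun s => deriv (fun t => Real.log (p k (s, Function.update x l t))) (x l))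
      = Ufun (fun pr => Real.log (p k pr)) l x := by
    funext s
    exact Ufun_spec (hq.differentiable (by norm_num)) l x s
  constructor
  · rw [vvec, hinner]
  · rw [vrvec, hinner]

lemma jacfun_contDiff {n : ℕ} {h : (Fin n → ℝ) → (Fin n → ℝ)} (hsmooth : ContDiff ℝ 2 h)
    (k i : Fin n) : ContDiff ℝ 1 (fun z => fderiv ℝ h z (Pi.single i 1) k) := by
  have h1 : ContDiff ℝ 1 (fderiv ℝ h) := hsmooth.fderiv_right (by norm_num)
  have h2 : ContDiff ℝ 1 (fun z => fderiv ℝ h z (Pi.single i 1)) :=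
    h1.clm_apply contDiff_const
  exact (ContinuousLinearMap.proj k : (Fin n → ℝ) →L[ℝ] ℝ).contDiff.comp h2

lemma key_offdiag {n : ℕ}
    (p : Fin n → ℝ × (Fin n → ℝ) → ℝ)
    (hppos : ∀ (k : Fin n) (s : ℝ) (x : Fin n → ℝ), 0 < p k (s, x))
    (hpsmooth : ∀ k, ContDiff ℝ 3 (p k))
    (phat : Fin n → ℝ × (Fin n → ℝ) → ℝ)
    (hphatpos : ∀ (i : Fin n) (s : ℝ) (x : Fin n → ℝ), 0 < phat i (s, x))
    (h : (Fin n → ℝ) → (Fin n → ℝ))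
    (hsmooth : ContDiff ℝ 2 h)
    (hJ : ∀ yh : Fin n → ℝ, IsUnit (jac h yh).det)
    (hchg : ∀ yh x : Fin n → ℝ,
      (∏ i, phat i (yh i, x)) = (∏ k, p k (h yh k, x)) * |(jac h yh).det|)
    (hli : ∀ y : Fin n → ℝ,
      LinearIndependent ℝ
        (Sum.elim (fun k => fun x => vvec p k y x) (fun k => fun x => vrvec p k y x) :
          Fin n ⊕ Fin n → (Fin n → ℝ) → Fin n → ℝ))
    (yy : Fin n → ℝ) (i j : Fin n) (hij : i ≠ j) (k : Fin n) :
    jac h yy k i * jac h yy k j = 0 := by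
  have hd : Differentiable ℝ h := hsmooth.differentiable (by norm_num)
  have hqc : ∀ k, ContDiff ℝ 3 (fun pr => Real.log (p k pr)) := fun k =>
    (hpsmooth k).log (fun pr => (hppos k pr.1 pr.2).ne')
  have hqd : ∀ k, Differentiable ℝ (fun pr => Real.log (p k pr)) := fun k =>
    (hqc k).differentiable (by norm_num)
  set c : Fin n → ℝ :=
    fun k => fderiv ℝ (fun z => fderiv ℝ h z (Pi.single i 1) k) yy (Pi.single j 1) with hc
  -- main pointwise identity
  have E : ∀ x : Fin n → ℝ, ∀ l : Fin n,
      ∑ k, (vrvec p k (h yy) x l * jac h yy k j * jac h yy k i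
        + vvec p k (h yy) x l * c k) = 0 := by
    intro x l
    set U : Fin n → ℝ → ℝ := fun k => Ufun (fun pr => Real.log (p k pr)) l x with hUdef
    have hUc : ∀ k, ContDiff ℝ 2 (U k) := fun k => Ufun_contDiff (hqc k) l x
    have hUd : ∀ k, Differentiable ℝ (U k) := fun k => (hUc k).differentiable (by norm_num)
    have hUd' : ∀ k, Differentiable ℝ (deriv (U k)) := by
      intro k
      have h2 : ContDiff ℝ (1 + 1) (U k) := by
        rw [show ((1 : WithTop ℕ∞) + 1) = 2 by norm_num]; exact hUc k
      exact ((contDiff_succ_iff_deriv.mp h2).2.2).differentiable one_ne_zero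
    set Θ : (Fin n → ℝ) → ℝ := fun z => ∑ k, U k (h z k) with hΘdef
    -- derivative of true side in x_l direction
    have hΘder : ∀ z, HasDerivAt
        (fun t => ∑ k, Real.log (p k (h z k, Function.update x l t))) (Θ z) (x l) := by
      intro z
      apply HasDerivAt.fun_sum
      intro k _
      have hf : DifferentiableAt ℝ (fun pr => Real.log (p k pr))
          (h z k, Function.update x l (x l)) := by
        rw [Function.update_eq_self]; exact (hqd k) _
      have := hasDerivAt_comp_update_snd hf
      rwa [Function.update_eq_self] at this
    set G : (Fin n → ℝ) → ℝ → ℝ :=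
      fun z t => ∑ m, Real.log (phat m (z m, Function.update x l t)) with hGdef
    have hGF : ∀ z t, G z t
        = (∑ k, Real.log (p k (h z k, Function.update x l t)))
          + Real.log |(jac h z).det| := by
      intro z t
      have hdet : |(jac h z).det| ≠ 0 := abs_ne_zero.mpr (hJ z).ne_zero
      have hprod : (∏ k, p k (h z k, Function.update x l t)) ≠ 0 :=
        Finset.prod_ne_zero_iff.mpr fun k _ => (hppos k _ _).ne'
      calc G z t = Real.log (∏ m, phat m (z m, Function.update x l t)) :=
            (Real.log_prod fun m _ => (hphatpos m _ _).ne').symm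
        _ = Real.log ((∏ k, p k (h z k, Function.update x l t)) * |(jac h z).det|) := by
            rw [hchg z (Function.update x l t)]
        _ = Real.log (∏ k, p k (h z k, Function.update x l t)) + Real.log |(jac h z).det| :=
            Real.log_mul hprod hdet
        _ = _ := by rw [Real.log_prod fun k _ => (hppos k _ _).ne']
    have hGder : ∀ z, HasDerivAt (G z) (Θ z) (x l) := by
      intro z
      have hGz : G z = fun t => (∑ k, Real.log (p k (h z k, Function.update x l t)))
          + Real.log |(jac h z).det| := funext (hGF z)
      rw [hGz]
      exact (hΘder z).add_const _
    have Gadd : ∀ a b t, G (Function.update (Function.update yy i a) j b) t + G yy t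
        = G (Function.update yy i a) t + G (Function.update yy j b) t := by
      intro a b t
      simp only [hGdef]
      rw [← Finset.sum_add_distrib, ← Finset.sum_add_distrib]
      apply Finset.sum_congr rfl
      intro m _
      by_cases hmi : m = i
      · subst hmi
        simp [Function.update_of_ne hij]
      · by_cases hmj : m = j
        · subst hmj
          simp only [Function.update_self, Function.update_of_ne hmi]
          ring
        · simp only [Function.update_of_ne hmi, Function.update_of_ne hmj]
    have Θadd : ∀ a b, Θ (Function.update (Function.update yy i a) j b)
        = Θ (Function.update yy i a) + Θ (Function.update yy j b) - Θ yy := by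
      intro a b
      have h1 := hGder (Function.update (Function.update yy i a) j b)
      have heq : G (Function.update (Function.update yy i a) j b)
          = fun t => G (Function.update yy i a) t + G (Function.update yy j b) t - G yy t := by
        funext t; have := Gadd a b t; linarith
      have h2 : HasDerivAt (G (Function.update (Function.update yy i a) j b))
          (Θ (Function.update yy i a) + Θ (Function.update yy j b) - Θ yy) (x l) := by
        rw [heq]
        exact ((hGder _).add (hGder _)).sub (hGder _)
      exact h1.unique h2
    have hinner : ∀ (w : Fin n → ℝ) (a₀ : ℝ), HasDerivAt (fun a => Θ (Function.update w i a))
        (∑ k, deriv (U k) (h (Function.update w i a₀) k)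
          * jac h (Function.update w i a₀) k i) a₀ := by
      intro w a₀
      apply HasDerivAt.fun_sum
      intro k _
      have hhk := hasDerivAt_h_coord hd w i a₀ k
      exact ((hUd k _).hasDerivAt).comp a₀ hhk
    set Φ : ℝ → ℝ := fun b => ∑ k, deriv (U k) (h (Function.update yy j b) k)
      * jac h (Function.update yy j b) k i with hΦdef
    have hΦ : ∀ b, deriv (fun a => Θ (Function.update (Function.update yy j b) i a)) (yy i)
        = Φ b := by
      intro b
      have hpt : Function.update (Function.update yy j b) i (yy i)
          = Function.update yy j b := by
        rw [show yy i = (Function.update yy j b) i from (Function.update_of_ne hij _ _).symm,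
          Function.update_eq_self]
      have := (hinner (Function.update yy j b) (yy i)).deriv
      rwa [hpt] at this
    have hconst : ∀ b, Φ b = Φ (yy j) := by
      have key : ∀ b', Φ b' = deriv (fun a => Θ (Function.update yy i a)) (yy i) := by
        intro b'
        rw [← hΦ b']
        have e1 : (fun a => Θ (Function.update (Function.update yy j b') i a))
            = fun a => Θ (Function.update yy i a) + (Θ (Function.update yy j b') - Θ yy) := by
          funext a
          rw [Function.update_comm (Ne.symm hij) b' a yy, Θadd a b']
          ring
        rw [e1, deriv_add_const]
      intro b; rw [key b, key (yy j)]
    have hBd : ∀ k, HasDerivAt (fun b => jac h (Function.update yy j b) k i) (c k) (yy j) := by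
      intro k
      have hJfd : DifferentiableAt ℝ (fun z => fderiv ℝ h z (Pi.single i 1) k)
          (Function.update yy j (yy j)) := by
        rw [Function.update_eq_self]
        exact ((jacfun_contDiff hsmooth k i).differentiable one_ne_zero) _
      have h1 := hasDerivAt_comp_update hJfd
      rw [Function.update_eq_self] at h1
      have h2 : (fun b => jac h (Function.update yy j b) k i)
          = fun b => fderiv ℝ h (Function.update yy j b) (Pi.single i 1) k :=
        funext fun b => jac_eq hd _ k i
      rw [h2]
      exact h1
    have hAd : ∀ k, HasDerivAt (fun b => deriv (U k) (h (Function.update yy j b) k))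
        (deriv (deriv (U k)) (h yy k) * jac h yy k j) (yy j) := by
      intro k
      have hhk := hasDerivAt_h_coord hd yy j (yy j) k
      have h1 := ((hUd' k _).hasDerivAt).comp _ hhk
      rw [Function.update_eq_self] at h1
      exact h1
    have hS : HasDerivAt Φ (∑ k, (deriv (deriv (U k)) (h yy k) * jac h yy k j * jac h yy k i
        + deriv (U k) (h yy k) * c k)) (yy j) := by
      apply HasDerivAt.fun_sum
      intro k _
      have := (hAd k).fun_mul (hBd k)
      simpa [Function.update_eq_self, mul_assoc] using this
    have hzero : (∑ k, (deriv (deriv (U k)) (h yy k) * jac h yy k j * jac h yy k i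
        + deriv (U k) (h yy k) * c k)) = 0 := by
      have h1 := hS.deriv
      rw [show Φ = fun _ => Φ (yy j) from funext hconst, deriv_const] at h1
      exact h1.symm
    rw [← hzero]
    apply Finset.sum_congr rfl
    intro k _
    rw [(vvec_eq p hppos hpsmooth k (h yy) x l).1, (vvec_eq p hppos hpsmooth k (h yy) x l).2]
  -- linear independence step
  have hli' := Fintype.linearIndependent_iff.mp (hli (h yy))
    (Sum.elim (fun k => c k) (fun k => jac h yy k j * jac h yy k i))
  have hsum : ∑ s : Fin n ⊕ Fin n,
      (Sum.elim (fun k => c k) (fun k => jac h yy k j * jac h yy k i)) s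
        • (Sum.elim (fun k => fun x => vvec p k (h yy) x)
            (fun k => fun x => vrvec p k (h yy) x) : Fin n ⊕ Fin n → (Fin n → ℝ) → Fin n → ℝ) s
      = 0 := by
    funext x
    funext l
    rw [Finset.sum_apply, Finset.sum_apply]
    rw [Fintype.sum_sum_type]
    simp only [Sum.elim_inl, Sum.elim_inr, Pi.smul_apply, smul_eq_mul, Pi.zero_apply]
    rw [← Finset.sum_add_distrib, ← E x l]
    apply Finset.sum_congr rfl
    intro k _
    ring
  have h0 := hli' hsum (Sum.inr k)
  rw [Sum.elim_inr] at h0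
  rw [mul_comm]
  exact h0

lemma coord_const {n : ℕ} {h : (Fin n → ℝ) → (Fin n → ℝ)} (hd : Differentiable ℝ h)
    (k i : Fin n) (hzero : ∀ z, jac h z k i = 0) :
    ∀ (z : Fin n → ℝ) (t : ℝ), h (Function.update z i t) k = h z k := by
  intro z t
  have hdiff : Differentiable ℝ (fun a => h (Function.update z i a) k) := fun a =>
    (hasDerivAt_h_coord hd z i a k).differentiableAt
  have hder : ∀ a, deriv (fun a => h (Function.update z i a) k) a = 0 := fun a => by
    rw [(hasDerivAt_h_coord hd z i a k).deriv, hzero]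
  have := is_const_of_deriv_eq_zero hdiff hder t (z i)
  rwa [Function.update_eq_self] at this

theorem stmt0_aux {n : ℕ}
    (p : Fin n → ℝ × (Fin n → ℝ) → ℝ)
    (hppos : ∀ (k : Fin n) (s : ℝ) (x : Fin n → ℝ), 0 < p k (s, x))
    (hpsmooth : ∀ k, ContDiff ℝ 3 (p k))
    (phat : Fin n → ℝ × (Fin n → ℝ) → ℝ)
    (hphatpos : ∀ (i : Fin n) (s : ℝ) (x : Fin n → ℝ), 0 < phat i (s, x))
    (h : (Fin n → ℝ) → (Fin n → ℝ))
    (hsmooth : ContDiff ℝ 2 h)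
    (hJ : ∀ yh : Fin n → ℝ, IsUnit (jac h yh).det)
    (hchg : ∀ yh x : Fin n → ℝ,
      (∏ i, phat i (yh i, x)) = (∏ k, p k (h yh k, x)) * |(jac h yh).det|)
    (hli : ∀ y : Fin n → ℝ,
      LinearIndependent ℝ
        (Sum.elim (fun k => fun x => vvec p k y x) (fun k => fun x => vrvec p k y x) :
          Fin n ⊕ Fin n → (Fin n → ℝ) → Fin n → ℝ)) :
    ∃ (σ : Equiv.Perm (Fin n)) (hcomp : Fin n → ℝ → ℝ),
      ∀ (yh : Fin n → ℝ) (k : Fin n), h yh k = hcomp k (yh (σ k)) := by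
  have hd : Differentiable ℝ h := hsmooth.differentiable (by norm_num)
  have key := key_offdiag p hppos hpsmooth phat hphatpos h hsmooth hJ hchg hli
  have hex : ∀ (z : Fin n → ℝ) (k : Fin n), ∃ i, jac h z k i ≠ 0 := by
    intro z k
    by_contra hcon
    push_neg at hcon
    exact (hJ z).ne_zero (Matrix.det_eq_zero_of_row_eq_zero k hcon)
  set F : (Fin n → ℝ) → Fin n → Fin n := fun z k => (hex z k).choose with hFdef
  have hF1 : ∀ z k, jac h z k (F z k) ≠ 0 := fun z k => (hex z k).choose_spec
  have hF2 : ∀ z k i, i ≠ F z k → jac h z k i = 0 := by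
    intro z k i hi
    rcases mul_eq_zero.mp (key z i (F z k) hi k) with h0 | h0
    · exact h0
    · exact absurd h0 (hF1 z k)
  have hFinj : ∀ z, Function.Injective (F z) := by
    intro z
    by_contra hcon
    have hsur : ¬ Function.Surjective (F z) := fun hs =>
      hcon (Finite.injective_iff_surjective.mpr hs)
    simp only [Function.Surjective, not_forall, not_exists] at hsur
    obtain ⟨j₀, hj₀⟩ := hsur
    have hcol : ∀ k, jac h z k j₀ = 0 := fun k =>
      hF2 z k j₀ (fun he => hj₀ k he.symm)
    exact (hJ z).ne_zero (Matrix.det_eq_zero_of_column_eq_zero j₀ hcol)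
  haveI : PreconnectedSpace (Fin n → ℝ) :=
    ⟨(convex_univ (𝕜 := ℝ) (E := Fin n → ℝ)).isPreconnected⟩
  have hcont : ∀ k i, Continuous fun z => jac h z k i := by
    intro k i
    rw [show (fun z => jac h z k i) = fun z => fderiv ℝ h z (Pi.single i 1) k from
      funext fun z => jac_eq hd z k i]
    exact (jacfun_contDiff hsmooth k i).continuous
  have hlc : ∀ k, IsLocallyConstant (fun z => F z k) := by
    intro k
    rw [IsLocallyConstant.iff_eventually_eq]
    intro z
    filter_upwards [(hcont k (F z k)).continuousAt.eventually_ne (hF1 z k)] with z' hz'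
    by_contra hcon
    exact hz' (hF2 z' k (F z k) (fun he => hcon he.symm))
  have hFconst : ∀ z k, F z k = F (fun _ => (0:ℝ)) k := fun z k =>
    (hlc k).apply_eq_of_preconnectedSpace z (fun _ => (0:ℝ))
  have hbij0 : Function.Bijective (F (fun _ => (0:ℝ))) :=
    ⟨hFinj _, Finite.injective_iff_surjective.mp (hFinj _)⟩
  refine ⟨Equiv.ofBijective _ hbij0, fun k t =>
    h (Function.update (fun _ => (0:ℝ)) (Equiv.ofBijective _ hbij0 k) t) k, ?_⟩
  set σ : Equiv.Perm (Fin n) := Equiv.ofBijective _ hbij0 with hσdef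
  have hσ : ∀ z k i, i ≠ σ k → jac h z k i = 0 := by
    intro z k i hi
    apply hF2 z k i
    rw [hFconst z k]
    exact hi
  have hstep : ∀ (k : Fin n) (z : Fin n → ℝ) (i : Fin n), i ≠ σ k → ∀ t,
      h (Function.update z i t) k = h z k := by
    intro k z i hi t
    exact coord_const hd k i (fun z' => hσ z' k i hi) z t
  intro z k
  have main : ∀ s : Finset (Fin n), σ k ∉ s → ∀ z : Fin n → ℝ,
      h (fun m => if m ∈ s then 0 else z m) k = h z k := by
    intro s
    induction s using Finset.induction_on with
    | empty => intro _ z; simp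
    | @insert j s hjs ih =>
      intro hins z
      have hjk : j ≠ σ k := fun he => hins (he ▸ Finset.mem_insert_self j s)
      have hsk : σ k ∉ s := fun hs => hins (Finset.mem_insert_of_mem hs)
      have hw : (fun m => if m ∈ insert j s then (0:ℝ) else z m)
          = Function.update (fun m => if m ∈ s then (0:ℝ) else z m) j 0 := by
        funext m
        by_cases hm : m = j
        · subst hm; simp
        · rw [Function.update_of_ne hm]
          simp [Finset.mem_insert, hm]
      rw [hw, hstep k _ j hjk 0, ih hsk z]
  have h1 := main (Finset.univ.erase (σ k)) (Finset.notMem_erase _ _) z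
  have h2 : (fun m => if m ∈ Finset.univ.erase (σ k) then (0:ℝ) else z m)
      = Function.update (fun _ => (0:ℝ)) (σ k) (z (σ k)) := by
    funext m
    by_cases hm : m = σ k
    · subst hm; simp
    · rw [Function.update_of_ne hm]
      simp [hm]
  rw [h2] at h1
  exact h1.symm

end Stmt0Aux

/-- Identifiability of the temporally latent process (analytic core of Lemma 1):
if the products of the estimated and the true conditional marginal densities are related
by the change-of-variables formula through a C² diffeomorphism `h` with everywhere
invertible Jacobian, and the sufficient-variability (linear independence) condition holds,
then `h` is a component-wise transformation of a permuted version of the coordinates. -/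
theorem stmt0 {n : ℕ} (hn : 1 ≤ n)
    (p : Fin n → ℝ × (Fin n → ℝ) → ℝ)
    (hppos : ∀ (k : Fin n) (s : ℝ) (x : Fin n → ℝ), 0 < p k (s, x))
    (hpsmooth : ∀ k, ContDiff ℝ 3 (p k))
    (phat : Fin n → ℝ × (Fin n → ℝ) → ℝ)
    (hphatpos : ∀ (i : Fin n) (s : ℝ) (x : Fin n → ℝ), 0 < phat i (s, x))
    (h : (Fin n → ℝ) → (Fin n → ℝ))
    (hbij : Function.Bijective h)
    (hsmooth : ContDiff ℝ 2 h)
    (hinv : ∃ g : (Fin n → ℝ) → (Fin n → ℝ),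
      ContDiff ℝ 2 g ∧ Function.LeftInverse g h ∧ Function.RightInverse g h)
    (hJ : ∀ yh : Fin n → ℝ, IsUnit (jac h yh).det)
    (hchg : ∀ yh x : Fin n → ℝ,
      (∏ i, phat i (yh i, x)) = (∏ k, p k (h yh k, x)) * |(jac h yh).det|)
    (hli : ∀ y : Fin n → ℝ,
      LinearIndependent ℝ
        (Sum.elim (fun k => fun x => vvec p k y x) (fun k => fun x => vrvec p k y x) :
          Fin n ⊕ Fin n → (Fin n → ℝ) → Fin n → ℝ)) :
    ∃ (σ : Equiv.Perm (Fin n)) (hcomp : Fin n → ℝ → ℝ),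
      ∀ (yh : Fin n → ℝ) (k : Fin n), h yh k = hcomp k (yh (σ k)) := by
  exact stmt0_aux p hppos hpsmooth phat hphatpos h hsmooth hJ hchg hli
end

section
/- Let n ≥ 1 and m ≥ n, and fix an injective map ι : {1,…,n} → {1,…,m} selecting n coordinates of the conditioning variable. For k = 1,…,n let p_k : ℝ × ℝᵐ → (0,∞) be three-times continuously differentiable conditional marginal densities, for i = 1,…,n let p̂_i : ℝ × ℝᵐ → (0,∞) be functions, and let h : ℝⁿ → ℝⁿ be a twice continuously differentiable bijection with twice continuously differentiable inverse whose Jacobian H(ŷ) is invertible at every ŷ, such that for all ŷ ∈ ℝⁿ and x ∈ ℝᵐ: ∏_{i=1}^n p̂_i(ŷ_i, x) = (∏_{k=1}^n p_k(h(ŷ)_k, x)) · |det H(ŷ)|. For each k define v_k(y,x) ∈ ℝⁿ with l-th entry ∂² log p_k(y_k, x) / ∂y_k ∂x_{ι(l)} and v̊_k(y,x) ∈ ℝⁿ with l-th entry ∂³ log p_k(y_k, x) / ∂y_k² ∂x_{ι(l)}. If for every fixed y ∈ ℝⁿ the 2n functions x ↦ v_k(y,x), x ↦ v̊_k(y,x)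 (k = 1,…,n) are linearly independent in the vector space of functions from ℝᵐ to ℝⁿ, then there exist a permutation σ of {1,…,n} and functions h_1,…,h_n : ℝ → ℝ such that h(ŷ)_k = h_k(ŷ_{σ(k)}) for all ŷ and k. -/
/-- `vvecSel ι p k y x` has `l`-th entry `∂² log p_k(y_k, x) / ∂y_k ∂x_{ι l}`. -/
noncomputable def vvecSel {n m : ℕ} (ι : Fin n → Fin m)
    (p : Fin n → ℝ × (Fin m → ℝ) → ℝ) (k : Fin n)
    (y : Fin n → ℝ) (x : Fin m → ℝ) : Fin n → ℝ := fun l =>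
  deriv (fun s => deriv (fun t => Real.log (p k (s, Function.update x (ι l) t))) (x (ι l))) (y k)

/-- `vrvecSel ι p k y x` has `l`-th entry `∂³ log p_k(y_k, x) / ∂y_k² ∂x_{ι l}`. -/
noncomputable def vrvecSel {n m : ℕ} (ι : Fin n → Fin m)
    (p : Fin n → ℝ × (Fin m → ℝ) → ℝ) (k : Fin n)
    (y : Fin n → ℝ) (x : Fin m → ℝ) : Fin n → ℝ := fun l =>
  deriv (deriv (fun s =>
    deriv (fun t => Real.log (p k (s, Function.update x (ι l) t))) (x (ι l)))) (y k)

open Function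

section Helpers

/-- The coordinate line `t ↦ Function.update x i t` has derivative `Pi.single i 1`. -/
lemma SVhasDerivAt_update {k : ℕ} (x : Fin k → ℝ) (i : Fin k) (t0 : ℝ) :
    HasDerivAt (fun t => Function.update x i t) (Pi.single i (1:ℝ)) t0 := by
  have hfun : (fun t : ℝ => Function.update x i t)
      = fun t => x + (t - x i) • (Pi.single i 1 : Fin k → ℝ) := by
    funext t; ext j
    rcases eq_or_ne j i with rfl | hj
    · simp
    · simp [Function.update_of_ne hj, Pi.single_eq_of_ne hj]
  rw [hfun]
  simpa using (((hasDerivAt_id t0).sub_const (x i)).smul_const (Pi.single i 1 : Fin k → ℝ)).const_add x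

lemma SVderiv_update_line {k : ℕ} {f : (Fin k → ℝ) → ℝ} {x : Fin k → ℝ} {i : Fin k} {t0 : ℝ}
    (hf : DifferentiableAt ℝ f (Function.update x i t0)) :
    HasDerivAt (fun t => f (Function.update x i t))
      (fderiv ℝ f (Function.update x i t0) (Pi.single i 1)) t0 :=
  hf.hasFDerivAt.comp_hasDerivAt t0 (SVhasDerivAt_update x i t0)

lemma SVcontDiff_fderiv_apply {E : Type*} [NormedAddCommGroup E] [NormedSpace ℝ E]
    {f : E → ℝ} {N : ℕ} (hf : ContDiff ℝ (N + 1 : ℕ) f) (v : E) :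
    ContDiff ℝ (N : ℕ) fun z => fderiv ℝ f z v := by
  refine (hf.fderiv_right ?_).clm_apply contDiff_const
  exact_mod_cast le_refl ((N : ℕ∞) + 1)

lemma SVfderiv_swap {E : Type*} [NormedAddCommGroup E] [NormedSpace ℝ E]
    {f : E → ℝ} (hf : ContDiff ℝ 2 f) (z v w : E) :
    fderiv ℝ (fun y => fderiv ℝ f y v) z w = fderiv ℝ (fun y => fderiv ℝ f y w) z v := by
  have hsymm : IsSymmSndFDerivAt ℝ f z :=
    (hf.contDiffAt (x := z)).isSymmSndFDerivAt (by simp)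
  have hd : DifferentiableAt ℝ (fderiv ℝ f) z := by
    have : ContDiff ℝ (1 : ℕ) (fderiv ℝ f) := by
      refine hf.fderiv_right ?_
      norm_num
    exact (this.differentiable (by norm_num)).differentiableAt
  have e : ∀ u : E, fderiv ℝ (fun y => fderiv ℝ f y u) z
      = (fderiv ℝ (fderiv ℝ f) z).flip u := by
    intro u
    have h2 := fderiv_clm_apply (c := fderiv ℝ f) (u := fun _ => u) hd
      (differentiableAt_const u)
    simpa using h2
  have e1 : fderiv ℝ (fun y => fderiv ℝ f y v) z w = fderiv ℝ (fderiv ℝ f) z w v := by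
    rw [e v]; rfl
  have e2 : fderiv ℝ (fun y => fderiv ℝ f y w) z v = fderiv ℝ (fderiv ℝ f) z v w := by
    rw [e w]; rfl
  rw [e1, e2, hsymm w v]

end Helpers

section Slices

variable {m : ℕ}

/-- Derivative in the first (scalar) coordinate of `f : ℝ × ℝᵐ → ℝ`. -/
noncomputable def SVDfst {m : ℕ} (f : ℝ × (Fin m → ℝ) → ℝ) (z : ℝ × (Fin m → ℝ)) : ℝ :=
  fderiv ℝ f z (1, 0)

/-- Derivative in the `q`-th coordinate of the second factor. -/
noncomputable def SVDcoord {m : ℕ} (q : Fin m) (f : ℝ × (Fin m → ℝ) → ℝ)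
    (z : ℝ × (Fin m → ℝ)) : ℝ :=
  fderiv ℝ f z (0, Pi.single q 1)

lemma SVcontDiff_Dfst {f : ℝ × (Fin m → ℝ) → ℝ} {N : ℕ} (hf : ContDiff ℝ (N + 1 : ℕ) f) :
    ContDiff ℝ (N : ℕ) (SVDfst f) :=
  SVcontDiff_fderiv_apply hf _

lemma SVcontDiff_Dcoord {f : ℝ × (Fin m → ℝ) → ℝ} {N : ℕ} (hf : ContDiff ℝ (N + 1 : ℕ) f)
    (q : Fin m) : ContDiff ℝ (N : ℕ) (SVDcoord q f) :=
  SVcontDiff_fderiv_apply hf _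

lemma SVhasDerivAt_fst_slice {f : ℝ × (Fin m → ℝ) → ℝ} {s0 : ℝ} {x : Fin m → ℝ}
    (hf : DifferentiableAt ℝ f (s0, x)) :
    HasDerivAt (fun s => f (s, x)) (SVDfst f (s0, x)) s0 := by
  have hline : HasDerivAt (fun s : ℝ => ((s, x) : ℝ × (Fin m → ℝ))) (1, 0) s0 :=
    (hasDerivAt_id s0).prodMk (hasDerivAt_const s0 x)
  exact hf.hasFDerivAt.comp_hasDerivAt s0 hline

lemma SVhasDerivAt_snd_slice {f : ℝ × (Fin m → ℝ) → ℝ} {s : ℝ} {x : Fin m → ℝ} {q : Fin m}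
    {t0 : ℝ} (hf : DifferentiableAt ℝ f (s, Function.update x q t0)) :
    HasDerivAt (fun t => f (s, Function.update x q t))
      (SVDcoord q f (s, Function.update x q t0)) t0 := by
  have hline : HasDerivAt (fun t : ℝ => ((s, Function.update x q t) : ℝ × (Fin m → ℝ)))
      (0, Pi.single q 1) t0 :=
    (hasDerivAt_const t0 s).prodMk (SVhasDerivAt_update x q t0)
  exact hf.hasFDerivAt.comp_hasDerivAt t0 hline

lemma SVswap {f : ℝ × (Fin m → ℝ) → ℝ} (hf : ContDiff ℝ 2 f) (q : Fin m) :
    SVDfst (SVDcoord q f) = SVDcoord q (SVDfst f) := by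
  funext z
  exact SVfderiv_swap hf z _ _

end Slices

section MixedPartials

variable {m : ℕ} {f : ℝ × (Fin m → ℝ) → ℝ}

lemma SVinner_eq (hf : ContDiff ℝ 3 f) (q : Fin m) (x : Fin m → ℝ) :
    (fun s => deriv (fun t => f (s, Function.update x q t)) (x q))
      = fun s => SVDcoord q f (s, x) := by
  funext s
  have hd : DifferentiableAt ℝ f (s, Function.update x q (x q)) :=
    (hf.differentiable (by norm_num)).differentiableAt
  have := (SVhasDerivAt_snd_slice (s := s) (x := x) (q := q) (t0 := x q) hd).deriv
  rwa [Function.update_eq_self] at this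

lemma SVvv (hf : ContDiff ℝ 3 f) (q : Fin m) (yk : ℝ) (x : Fin m → ℝ) :
    deriv (fun s => deriv (fun t => f (s, Function.update x q t)) (x q)) yk
      = SVDcoord q (SVDfst f) (yk, x) := by
  have hf2 : ContDiff ℝ ((1:ℕ) + 1 : ℕ) f := by exact_mod_cast hf.of_le (by norm_num)
  rw [SVinner_eq hf q x]
  have hd : DifferentiableAt ℝ (SVDcoord q f) (yk, x) :=
    ((SVcontDiff_Dcoord (N := 1) hf2 q).differentiable (by norm_num)).differentiableAt
  rw [(SVhasDerivAt_fst_slice hd).deriv]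
  rw [← SVswap (by exact_mod_cast hf.of_le (by norm_num)) q]

lemma SVvr (hf : ContDiff ℝ 3 f) (q : Fin m) (yk : ℝ) (x : Fin m → ℝ) :
    deriv (deriv (fun s => deriv (fun t => f (s, Function.update x q t)) (x q))) yk
      = SVDcoord q (SVDfst (SVDfst f)) (yk, x) := by
  have hf2 : ContDiff ℝ ((1:ℕ) + 1 : ℕ) f := by exact_mod_cast hf.of_le (by norm_num)
  have hf2' : ContDiff ℝ (2 : ℕ∞) f := by exact_mod_cast hf.of_le (by norm_num)
  rw [SVinner_eq hf q x]
  have hDc2 : ContDiff ℝ ((1:ℕ) + 1 : ℕ) (SVDcoord q f) := by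
    have h3 : ContDiff ℝ ((2:ℕ) + 1 : ℕ) f := by exact_mod_cast hf
    exact_mod_cast SVcontDiff_Dcoord (N := 2) h3 q
  have hstep : deriv (fun s => SVDcoord q f (s, x)) = fun s => SVDfst (SVDcoord q f) (s, x) := by
    funext s
    have hd : DifferentiableAt ℝ (SVDcoord q f) (s, x) :=
      ((SVcontDiff_Dcoord (N := 1) hf2 q).differentiable (by norm_num)).differentiableAt
    exact (SVhasDerivAt_fst_slice hd).deriv
  rw [hstep]
  have hd2 : DifferentiableAt ℝ (SVDfst (SVDcoord q f)) (yk, x) :=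
    ((SVcontDiff_Dfst (N := 1) hDc2).differentiable (by norm_num)).differentiableAt
  rw [(SVhasDerivAt_fst_slice hd2).deriv]
  have e1 : SVDfst (SVDcoord q f) = SVDcoord q (SVDfst f) :=
    SVswap (by exact_mod_cast hf.of_le (by norm_num)) q
  rw [e1]
  have hDf2 : ContDiff ℝ (2 : ℕ∞) (SVDfst f) := by
    have h3 : ContDiff ℝ ((2:ℕ) + 1 : ℕ) f := by exact_mod_cast hf
    exact_mod_cast SVcontDiff_Dfst (N := 2) h3
  exact congrFun (SVswap (by exact_mod_cast hDf2) q) (yk, x)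

end MixedPartials

section Key

variable {n m : ℕ}

/-- `SVH h k i z` is the `(k,i)` Jacobian entry of `h` at `z`, in `fderiv` form. -/
noncomputable def SVH {n : ℕ} (h : (Fin n → ℝ) → (Fin n → ℝ)) (k i : Fin n)
    (z : Fin n → ℝ) : ℝ :=
  fderiv ℝ (fun y => h y k) z (Pi.single i 1)

lemma SVjac_eq {h : (Fin n → ℝ) → (Fin n → ℝ)} (hsmooth : ContDiff ℝ 2 h)
    (z : Fin n → ℝ) (k i : Fin n) : jac h z k i = SVH h k i z := by
  have hk : ContDiff ℝ 2 (fun y => h y k) := contDiff_pi.mp hsmooth k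
  have hd : DifferentiableAt ℝ (fun y => h y k) (Function.update z i (z i)) :=
    ((hk.differentiable (by norm_num)).differentiableAt)
  have := (SVderiv_update_line (f := fun y => h y k) (x := z) (i := i) (t0 := z i) hd).deriv
  rw [Function.update_eq_self] at this
  exact this

/-- first-coordinate derivative of the log-density -/
noncomputable def SVr {n m : ℕ} (p : Fin n → ℝ × (Fin m → ℝ) → ℝ) (k : Fin n) :
    ℝ × (Fin m → ℝ) → ℝ :=
  SVDfst (fun z => Real.log (p k z))

/-- second first-coordinate derivative of the log-density -/
noncomputable def SVw {n m : ℕ} (p : Fin n → ℝ × (Fin m → ℝ) → ℝ) (k : Fin n) :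
    ℝ × (Fin m → ℝ) → ℝ :=
  SVDfst (SVr p k)

lemma SVkey
    (ι : Fin n → Fin m)
    (p : Fin n → ℝ × (Fin m → ℝ) → ℝ)
    (hppos : ∀ (k : Fin n) (s : ℝ) (x : Fin m → ℝ), 0 < p k (s, x))
    (hpsmooth : ∀ k, ContDiff ℝ 3 (p k))
    (phat : Fin n → ℝ × (Fin m → ℝ) → ℝ)
    (hphatpos : ∀ (i : Fin n) (s : ℝ) (x : Fin m → ℝ), 0 < phat i (s, x))
    (h : (Fin n → ℝ) → (Fin n → ℝ))
    (hsmooth : ContDiff ℝ 2 h)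
    (hJ : ∀ yh : Fin n → ℝ, IsUnit (jac h yh).det)
    (hchg : ∀ (yh : Fin n → ℝ) (x : Fin m → ℝ),
      (∏ i, phat i (yh i, x)) = (∏ k, p k (h yh k, x)) * |(jac h yh).det|)
    (hli : ∀ y : Fin n → ℝ,
      LinearIndependent ℝ
        (Sum.elim (fun k => fun x => vvecSel ι p k y x) (fun k => fun x => vrvecSel ι p k y x) :
          Fin n ⊕ Fin n → (Fin m → ℝ) → Fin n → ℝ))
    (yh : Fin n → ℝ) (a j : Fin n) (haj : a ≠ j) (k : Fin n) :
    SVH h k j yh * SVH h k a yh = 0 := by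
  classical
  -- log-densities are C³
  have hL : ∀ k', ContDiff ℝ 3 (fun z : ℝ × (Fin m → ℝ) => Real.log (p k' z)) := fun k' =>
    (hpsmooth k').log (fun z => (hppos k' z.1 z.2).ne')
  have hk : ∀ k', ContDiff ℝ 2 (fun y => h y k') := fun k' => contDiff_pi.mp hsmooth k'
  have hdet : ∀ z, (jac h z).det ≠ 0 := fun z => (hJ z).ne_zero
  -- the log change-of-variables identity
  have hlog : ∀ (x : Fin m → ℝ) (z : Fin n → ℝ),
      (∑ i, Real.log (phat i (z i, x)))
        = (∑ k', Real.log (p k' (h z k', x))) + Real.log |(jac h z).det| := by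
    intro x z
    have h2 : Real.log (∏ i, phat i (z i, x)) = ∑ i, Real.log (phat i (z i, x)) :=
      Real.log_prod (fun i _ => (hphatpos i _ x).ne')
    have h3 : Real.log ((∏ k', p k' (h z k', x)) * |(jac h z).det|)
        = (∑ k', Real.log (p k' (h z k', x))) + Real.log |(jac h z).det| := by
      rw [Real.log_mul (Finset.prod_ne_zero_iff.mpr fun k' _ => (hppos k' _ x).ne')
        (abs_ne_zero.mpr (hdet z)), Real.log_prod (fun k' _ => (hppos k' _ x).ne')]
    rw [← h2, hchg z x, h3]
  have hFG : ∀ (x x0 : Fin m → ℝ) (z : Fin n → ℝ),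
      (∑ k', (Real.log (p k' (h z k', x)) - Real.log (p k' (h z k', x0))))
        = ∑ i, (Real.log (phat i (z i, x)) - Real.log (phat i (z i, x0))) := by
    intro x x0 z
    have e1 := hlog x z
    have e2 := hlog x0 z
    rw [Finset.sum_sub_distrib, Finset.sum_sub_distrib]
    linarith
  -- derivative of a coordinate of h along a coordinate line
  have hinner : ∀ (i : Fin n) (k' : Fin n) (z : Fin n → ℝ),
      HasDerivAt (fun t => h (Function.update z i t) k') (SVH h k' i z) (z i) := by
    intro i k' z
    have hd : DifferentiableAt ℝ (fun y => h y k') (Function.update z i (z i)) :=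
      ((hk k').differentiable (by norm_num)).differentiableAt
    have h1 := SVderiv_update_line (f := fun y => h y k') (x := z) (i := i) (t0 := z i) hd
    rwa [Function.update_eq_self] at h1
  have hr2 : ∀ k', ContDiff ℝ ((1:ℕ) + 1 : ℕ) (SVr p k') := by
    intro k'
    have h3 : ContDiff ℝ ((2:ℕ) + 1 : ℕ) (fun z : ℝ × (Fin m → ℝ) => Real.log (p k' z)) := by
      exact_mod_cast hL k'
    exact_mod_cast SVcontDiff_Dfst (N := 2) h3
  have hw1 : ∀ k', ContDiff ℝ ((0:ℕ) + 1 : ℕ) (SVw p k') := by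
    intro k'
    exact_mod_cast SVcontDiff_Dfst (N := 1) (by exact_mod_cast hr2 k')
  -- chain rule for the `j`-partial of the summed log-density difference
  have hPchain : ∀ (x x0 : Fin m → ℝ) (z : Fin n → ℝ),
      HasDerivAt (fun t' => ∑ k', (Real.log (p k' (h (Function.update z j t') k', x))
          - Real.log (p k' (h (Function.update z j t') k', x0))))
        (∑ k', (SVr p k' (h z k', x) - SVr p k' (h z k', x0)) * SVH h k' j z) (z j) := by
    intro x x0 z
    refine HasDerivAt.fun_sum fun k' _ => ?_
    have hout : ∀ x' : Fin m → ℝ, HasDerivAt (fun s => Real.log (p k' (s, x')))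
        (SVr p k' (h z k', x')) (h z k') :=
      fun x' => SVhasDerivAt_fst_slice (((hL k').differentiable (by norm_num)).differentiableAt)
    have hout' : ∀ x' : Fin m → ℝ, HasDerivAt (fun s => Real.log (p k' (s, x')))
        (SVr p k' (h z k', x')) (h (Function.update z j (z j)) k') := by
      intro x'; rw [Function.update_eq_self]; exact hout x'
    have h1 : HasDerivAt (fun t' => Real.log (p k' (h (Function.update z j t') k', x)))
        (SVr p k' (h z k', x) * SVH h k' j z) (z j) :=
      by have := (hout' x).comp (z j) (hinner j k' z); exact this
    have h2 : HasDerivAt (fun t' => Real.log (p k' (h (Function.update z j t') k', x0)))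
        (SVr p k' (h z k', x0) * SVH h k' j z) (z j) :=
      by have := (hout' x0).comp (z j) (hinner j k' z); exact this
    have := h1.sub h2
    exact this.congr_deriv (by ring)
  -- the same derivative computed from the separable representation
  have hPsep : ∀ (x x0 : Fin m → ℝ) (z : Fin n → ℝ),
      deriv (fun t' => ∑ k', (Real.log (p k' (h (Function.update z j t') k', x))
          - Real.log (p k' (h (Function.update z j t') k', x0)))) (z j)
        = deriv (fun t : ℝ => Real.log (phat j (t, x)) - Real.log (phat j (t, x0))) (z j) := by
    intro x x0 z
    have hfun : (fun t' => ∑ k', (Real.log (p k' (h (Function.update z j t') k', x))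
          - Real.log (p k' (h (Function.update z j t') k', x0))))
        = fun t' => (Real.log (phat j (t', x)) - Real.log (phat j (t', x0)))
          + ∑ i ∈ Finset.univ.erase j,
              (Real.log (phat i (z i, x)) - Real.log (phat i (z i, x0))) := by
      funext t'
      rw [hFG x x0 (Function.update z j t'),
        ← Finset.add_sum_erase _ _ (Finset.mem_univ j)]
      congr 1
      · rw [Function.update_self]
      · exact Finset.sum_congr rfl fun i hi => by
          rw [Function.update_of_ne (Finset.ne_of_mem_erase hi)]
    rw [hfun, deriv_add_const]
  -- hence the chain-rule expression is a function of `z j` alone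
  have hQ : ∀ (x x0 : Fin m → ℝ) (z : Fin n → ℝ),
      (∑ k', (SVr p k' (h z k', x) - SVr p k' (h z k', x0)) * SVH h k' j z)
        = deriv (fun t : ℝ => Real.log (phat j (t, x)) - Real.log (phat j (t, x0))) (z j) := by
    intro x x0 z
    rw [← (hPchain x x0 z).deriv]
    exact hPsep x x0 z
  -- SVH h k' j is C¹ in z
  have hHsm : ∀ k', ContDiff ℝ ((0:ℕ) + 1 : ℕ) (SVH h k' j) := fun k' => by
    exact_mod_cast SVcontDiff_fderiv_apply (N := 1) (by exact_mod_cast hk k') _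
  -- the master identity obtained by differentiating along the `a`-line
  have hmaster : ∀ x x0 : Fin m → ℝ,
      (∑ k', ((SVw p k' (h yh k', x) - SVw p k' (h yh k', x0))
            * SVH h k' a yh * SVH h k' j yh
          + (SVr p k' (h yh k', x) - SVr p k' (h yh k', x0))
            * fderiv ℝ (SVH h k' j) yh (Pi.single a 1))) = 0 := by
    intro x x0
    have hterm : ∀ k', HasDerivAt
        (fun t => (SVr p k' (h (Function.update yh a t) k', x)
              - SVr p k' (h (Function.update yh a t) k', x0))
            * SVH h k' j (Function.update yh a t))
        ((SVw p k' (h yh k', x) - SVw p k' (h yh k', x0))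
            * SVH h k' a yh * SVH h k' j yh
          + (SVr p k' (h yh k', x) - SVr p k' (h yh k', x0))
            * fderiv ℝ (SVH h k' j) yh (Pi.single a 1)) (yh a) := by
      intro k'
      have hf1x : ∀ x' : Fin m → ℝ, HasDerivAt
          (fun t => SVr p k' (h (Function.update yh a t) k', x'))
          (SVw p k' (h yh k', x') * SVH h k' a yh) (yh a) := by
        intro x'
        have hout : HasDerivAt (fun s => SVr p k' (s, x')) (SVw p k' (h yh k', x'))
            (h (Function.update yh a (yh a)) k') := by
          rw [Function.update_eq_self]
          exact SVhasDerivAt_fst_slice (((hr2 k').differentiable (by norm_num)).differentiableAt)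
        exact hout.comp (yh a) (hinner a k' yh)
      have hf2 : HasDerivAt (fun t => SVH h k' j (Function.update yh a t))
          (fderiv ℝ (SVH h k' j) yh (Pi.single a 1)) (yh a) := by
        have hd : DifferentiableAt ℝ (SVH h k' j) (Function.update yh a (yh a)) :=
          ((hHsm k').differentiable (by norm_num)).differentiableAt
        have h1 := SVderiv_update_line (f := SVH h k' j) (x := yh) (i := a) (t0 := yh a) hd
        rwa [Function.update_eq_self] at h1
      have hmul := ((hf1x x).sub (hf1x x0)).mul hf2
      exact hmul.congr_deriv (by simp only [Pi.sub_apply, Function.update_eq_self]; ring)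
    have hGd := HasDerivAt.fun_sum (fun k' (_ : k' ∈ Finset.univ) => hterm k')
    have hGconst : (fun t => ∑ k', (SVr p k' (h (Function.update yh a t) k', x)
            - SVr p k' (h (Function.update yh a t) k', x0))
          * SVH h k' j (Function.update yh a t))
        = fun _ => deriv (fun t : ℝ => Real.log (phat j (t, x))
            - Real.log (phat j (t, x0))) (yh j) := by
      funext t
      rw [hQ x x0 (Function.update yh a t), Function.update_of_ne (Ne.symm haj)]
    have h0 : deriv (fun t => ∑ k', (SVr p k' (h (Function.update yh a t) k', x)
            - SVr p k' (h (Function.update yh a t) k', x0))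
          * SVH h k' j (Function.update yh a t)) (yh a) = 0 := by
      rw [hGconst]; exact deriv_const _ _
    rw [hGd.deriv] at h0
    exact h0
  -- reorganize: a fixed linear combination of `SVw` and `SVr` slices is constant in `x`
  have hconst : ∀ x x0 : Fin m → ℝ,
      (∑ k', (SVw p k' (h yh k', x) * (SVH h k' a yh * SVH h k' j yh)
          + SVr p k' (h yh k', x) * fderiv ℝ (SVH h k' j) yh (Pi.single a 1)))
        = ∑ k', (SVw p k' (h yh k', x0) * (SVH h k' a yh * SVH h k' j yh)
          + SVr p k' (h yh k', x0) * fderiv ℝ (SVH h k' j) yh (Pi.single a 1)) := by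
    intro x x0
    rw [← sub_eq_zero, ← Finset.sum_sub_distrib, ← hmaster x x0]
    exact Finset.sum_congr rfl fun k' _ => by ring
  -- differentiate the constant in the `ι l` direction of `x`
  have hderiv0 : ∀ (x : Fin m → ℝ) (l : Fin n),
      (∑ k', (SVDcoord (ι l) (SVw p k') (h yh k', x) * (SVH h k' a yh * SVH h k' j yh)
          + SVDcoord (ι l) (SVr p k') (h yh k', x)
            * fderiv ℝ (SVH h k' j) yh (Pi.single a 1))) = 0 := by
    intro x l
    have hterm : ∀ k', HasDerivAt
        (fun t => SVw p k' (h yh k', Function.update x (ι l) t)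
            * (SVH h k' a yh * SVH h k' j yh)
          + SVr p k' (h yh k', Function.update x (ι l) t)
            * fderiv ℝ (SVH h k' j) yh (Pi.single a 1))
        (SVDcoord (ι l) (SVw p k') (h yh k', x) * (SVH h k' a yh * SVH h k' j yh)
          + SVDcoord (ι l) (SVr p k') (h yh k', x)
            * fderiv ℝ (SVH h k' j) yh (Pi.single a 1)) (x (ι l)) := by
      intro k'
      have hw := SVhasDerivAt_snd_slice (f := SVw p k') (s := h yh k') (x := x)
        (q := ι l) (t0 := x (ι l))
        (((hw1 k').differentiable (by norm_num)).differentiableAt)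
      have hrr := SVhasDerivAt_snd_slice (f := SVr p k') (s := h yh k') (x := x)
        (q := ι l) (t0 := x (ι l))
        (((hr2 k').differentiable (by norm_num)).differentiableAt)
      rw [Function.update_eq_self] at hw hrr
      exact (hw.mul_const _).add (hrr.mul_const _)
    have hs := HasDerivAt.fun_sum (fun k' (_ : k' ∈ Finset.univ) => hterm k')
    have hconstf : (fun t => ∑ k', (SVw p k' (h yh k', Function.update x (ι l) t)
            * (SVH h k' a yh * SVH h k' j yh)
          + SVr p k' (h yh k', Function.update x (ι l) t)
            * fderiv ℝ (SVH h k' j) yh (Pi.single a 1)))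
        = fun _ => ∑ k', (SVw p k' (h yh k', x) * (SVH h k' a yh * SVH h k' j yh)
          + SVr p k' (h yh k', x) * fderiv ℝ (SVH h k' j) yh (Pi.single a 1)) :=
      funext fun t => hconst (Function.update x (ι l) t) x
    have h0 : deriv (fun t => ∑ k', (SVw p k' (h yh k', Function.update x (ι l) t)
            * (SVH h k' a yh * SVH h k' j yh)
          + SVr p k' (h yh k', Function.update x (ι l) t)
            * fderiv ℝ (SVH h k' j) yh (Pi.single a 1))) (x (ι l)) = 0 := by
      rw [hconstf]; exact deriv_const _ _
    rw [hs.deriv] at h0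
    exact h0
  -- identify the slice derivatives with `vvecSel` and `vrvecSel`
  have hvv : ∀ (k' : Fin n) (x' : Fin m → ℝ) (l : Fin n),
      vvecSel ι p k' (h yh) x' l = SVDcoord (ι l) (SVr p k') (h yh k', x') := by
    intro k' x' l
    exact SVvv (f := fun z => Real.log (p k' z)) (hL k') (ι l) (h yh k') x'
  have hvr : ∀ (k' : Fin n) (x' : Fin m → ℝ) (l : Fin n),
      vrvecSel ι p k' (h yh) x' l = SVDcoord (ι l) (SVw p k') (h yh k', x') := by
    intro k' x' l
    exact SVvr (f := fun z => Real.log (p k' z)) (hL k') (ι l) (h yh k') x'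
  -- apply linear independence
  have hLI := Fintype.linearIndependent_iff.mp (hli (h yh))
    (Sum.elim (fun k' => fderiv ℝ (SVH h k' j) yh (Pi.single a 1))
      (fun k' => SVH h k' a yh * SVH h k' j yh))
  have hA := hLI ?_ (Sum.inr k)
  · simp only [Sum.elim_inr] at hA
    rw [mul_comm]
    exact hA
  · rw [Fintype.sum_sum_type]
    simp only [Sum.elim_inl, Sum.elim_inr]
    refine funext fun x' => funext fun l => ?_
    have hd := hderiv0 x' l
    simp only [Pi.add_apply, Finset.sum_apply, Pi.smul_apply, smul_eq_mul, Pi.zero_apply]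
    rw [← Finset.sum_add_distrib, ← hd]
    refine Finset.sum_congr rfl fun k' _ => ?_
    rw [hvv k' x' l, hvr k' x' l]
    ring

end Key

/-- Extension of Lemma 1 to multiple lags: the conditioning variable lives in `ℝᵐ`
(`m ≥ n`), the sufficient-variability derivatives are taken with respect to the `n`
coordinates selected by the injection `ι` (one particular lag), and the same
component-wise-permutation identifiability conclusion holds. -/
theorem stmt15 {n m : ℕ} (hn : 1 ≤ n) (hm : n ≤ m)
    (ι : Fin n → Fin m) (hι : Function.Injective ι)
    (p : Fin n → ℝ × (Fin m → ℝ) → ℝ)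
    (hppos : ∀ (k : Fin n) (s : ℝ) (x : Fin m → ℝ), 0 < p k (s, x))
    (hpsmooth : ∀ k, ContDiff ℝ 3 (p k))
    (phat : Fin n → ℝ × (Fin m → ℝ) → ℝ)
    (hphatpos : ∀ (i : Fin n) (s : ℝ) (x : Fin m → ℝ), 0 < phat i (s, x))
    (h : (Fin n → ℝ) → (Fin n → ℝ))
    (hbij : Function.Bijective h)
    (hsmooth : ContDiff ℝ 2 h)
    (hinv : ∃ g : (Fin n → ℝ) → (Fin n → ℝ),
      ContDiff ℝ 2 g ∧ Function.LeftInverse g h ∧ Function.RightInverse g h)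
    (hJ : ∀ yh : Fin n → ℝ, IsUnit (jac h yh).det)
    (hchg : ∀ (yh : Fin n → ℝ) (x : Fin m → ℝ),
      (∏ i, phat i (yh i, x)) = (∏ k, p k (h yh k, x)) * |(jac h yh).det|)
    (hli : ∀ y : Fin n → ℝ,
      LinearIndependent ℝ
        (Sum.elim (fun k => fun x => vvecSel ι p k y x) (fun k => fun x => vrvecSel ι p k y x) :
          Fin n ⊕ Fin n → (Fin m → ℝ) → Fin n → ℝ)) :
    ∃ (σ : Equiv.Perm (Fin n)) (hcomp : Fin n → ℝ → ℝ),
      ∀ (yh : Fin n → ℝ) (k : Fin n), h yh k = hcomp k (yh (σ k)) := by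
  classical
  have hk : ∀ k', ContDiff ℝ 2 (fun y => h y k') := fun k' => contDiff_pi.mp hsmooth k'
  have hjac : ∀ (z : Fin n → ℝ) (k' i : Fin n), jac h z k' i = SVH h k' i z :=
    fun z k' i => SVjac_eq hsmooth z k' i
  have hdet : ∀ z, (jac h z).det ≠ 0 := fun z => (hJ z).ne_zero
  have hprod : ∀ (z : Fin n → ℝ) (k' i i' : Fin n), i ≠ i' →
      SVH h k' i z * SVH h k' i' z = 0 := by
    intro z k' i i' hne
    exact SVkey ι p hppos hpsmooth phat hphatpos h hsmooth hJ hchg hli z i' i (Ne.symm hne) k'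
  have hex : ∀ (z : Fin n → ℝ) (k' : Fin n), ∃ i, SVH h k' i z ≠ 0 := by
    intro z k'
    by_contra hno
    push_neg at hno
    exact hdet z (Matrix.det_eq_zero_of_row_eq_zero k' fun i => by
      rw [hjac z k' i]; exact hno i)
  choose c hc using hex
  have huniq : ∀ (z : Fin n → ℝ) (k' i : Fin n), SVH h k' i z ≠ 0 → i = c z k' := by
    intro z k' i hi
    by_contra hne
    rcases mul_eq_zero.mp (hprod z k' i (c z k') hne) with h1 | h1
    · exact hi h1
    · exact hc z k' h1
  have hcsurj : ∀ z, Function.Surjective (c z) := by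
    intro z
    by_contra hns
    have : ∃ i0, ∀ k', c z k' ≠ i0 := by
      simpa [Function.Surjective, not_forall] using hns
    obtain ⟨i0, hi0⟩ := this
    apply hdet z
    apply Matrix.det_eq_zero_of_column_eq_zero i0
    intro k'
    rw [hjac]
    by_contra hnz
    exact hi0 k' (huniq z k' i0 hnz).symm
  have hcinj : ∀ z, Function.Injective (c z) :=
    fun z => Finite.injective_iff_surjective.mpr (hcsurj z)
  have hHcont : ∀ k' i, Continuous (SVH h k' i) := by
    intro k' i
    have h1 : ContDiff ℝ ((0:ℕ) + 1 : ℕ) (SVH h k' i) := by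
      exact_mod_cast SVcontDiff_fderiv_apply (N := 1) (by exact_mod_cast hk k') _
    exact h1.continuous
  have hlc : ∀ k', IsLocallyConstant fun z => c z k' := by
    intro k'
    rw [IsLocallyConstant.iff_eventually_eq]
    intro z
    have hopen : ∀ᶠ y in nhds z, SVH h k' (c z k') y ≠ 0 := by
      have ho : IsOpen {y | SVH h k' (c z k') y ≠ 0} :=
        isOpen_compl_singleton.preimage (hHcont k' (c z k'))
      exact ho.mem_nhds (hc z k')
    filter_upwards [hopen] with y hy
    exact (huniq y k' _ hy).symm
  have hcconst : ∀ (z : Fin n → ℝ) (k' : Fin n), c z k' = c 0 k' := by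
    intro z k'
    exact congrFun ((hlc k').eq_const (0 : Fin n → ℝ)) z
  have hzero : ∀ (k' i : Fin n), i ≠ c 0 k' → ∀ z, SVH h k' i z = 0 := by
    intro k' i hi z
    by_contra hnz
    exact hi ((huniq z k' i hnz).trans (hcconst z k'))
  have hconstdir : ∀ (k' i : Fin n), i ≠ c 0 k' → ∀ (z : Fin n → ℝ) (t : ℝ),
      h (Function.update z i t) k' = h z k' := by
    intro k' i hi z t
    have hdiff : Differentiable ℝ fun u => h (Function.update z i u) k' := by
      intro u
      exact ((((hk k').differentiable (by norm_num)).differentiableAt).hasFDerivAt.comp_hasDerivAt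
        u (SVhasDerivAt_update z i u)).differentiableAt
    have hder : ∀ u, deriv (fun u => h (Function.update z i u) k') u = 0 := by
      intro u
      rw [(SVderiv_update_line (f := fun y => h y k') (x := z) (i := i) (t0 := u)
        (((hk k').differentiable (by norm_num)).differentiableAt)).deriv]
      exact hzero k' i hi (Function.update z i u)
    have hcc := is_const_of_deriv_eq_zero hdiff hder t (z i)
    rwa [Function.update_eq_self] at hcc
  have hreduce : ∀ (k' : Fin n) (s : Finset (Fin n)), c 0 k' ∉ s → ∀ z : Fin n → ℝ,
      h (fun j' => if j' ∈ s then 0 else z j') k' = h z k' := by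
    intro k' s
    induction s using Finset.induction_on with
    | empty => intro _ z; simp
    | @insert i s his ih =>
      intro hnotin z
      have hii0 : i ≠ c 0 k' := fun e => hnotin (e ▸ Finset.mem_insert_self i s)
      have hs : c 0 k' ∉ s := fun e => hnotin (Finset.mem_insert_of_mem e)
      have hfun : (fun j' => if j' ∈ insert i s then (0:ℝ) else z j')
          = Function.update (fun j' => if j' ∈ s then (0:ℝ) else z j') i 0 := by
        funext j'
        rcases eq_or_ne j' i with rfl | hji
        · simp [Function.update_self, his]
        · rw [Function.update_of_ne hji]
          simp [Finset.mem_insert, hji]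
      rw [hfun, hconstdir k' i hii0 _ 0, ih hs z]
  refine ⟨Equiv.ofBijective (c 0) ⟨hcinj 0, hcsurj 0⟩,
    fun k' t => h (Function.update (0 : Fin n → ℝ) (c 0 k') t) k', ?_⟩
  intro yh k'
  simp only [Equiv.ofBijective_apply]
  have h1 := hreduce k' (Finset.univ.erase (c 0 k')) (Finset.notMem_erase _ _) yh
  rw [← h1]
  congr 1
  funext j'
  rcases eq_or_ne j' (c 0 k') with rfl | hj
  · simp [Finset.mem_erase]
    rfl
  · simp [Finset.mem_erase, hj, Function.update_of_ne hj]
end
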